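/- In a commutative ring A of characteristic p, if a ∈ A satisfies a^p = 0, then the sequence defined by a_n = a^n / n! for n < p (i.e., the unique element with n! * a_n = a^n, given by explicit construction using that n! is invertible mod p for n < p) and a_n = 0 for n ≥ p is a divided power sequence: a_0 = 1, a_1 = a, and binom(n+m, n) * a_{n+m} = a_n * a_m for all n, m. -/
import Mathlib


/-- If `a ^ p = 0` in a commutative ring of characteristic `p`, then the sequence
`a_n = a^n / n!` for `n < p` (defined using the inverse of `n!` in `ZMod p`)
and `a_n = 0` for `n ≥ p` is a divided power sequence on `a`. -/
theorem pd_seq_of_pow_p_eq_zero {p : ℕ} (hp : p.Prime)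
    (A : Type*) [CommRing A] [CharP A p] (a : A) (ha : a ^ p = 0)
    (s : ℕ → A)
    (hs : s = fun n => if n < p then ((((n.factorial : ZMod p))⁻¹.val : A) * a ^ n) else 0) :
    s 0 = 1 ∧ s 1 = a ∧
      ∀ n m : ℕ, (Nat.choose (n + m) n : A) * s (n + m) = s n * s m := by
  haveI : Fact p.Prime := ⟨hp⟩
  subst hs
  have hpos := hp.pos
  have fact_ne : ∀ k, k < p → (k.factorial : ZMod p) ≠ 0 := by
    intro k hk
    rw [Ne, ZMod.natCast_eq_zero_iff]
    intro hd
    have := (Nat.Prime.dvd_factorial hp).mp hd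
    omega
  set f : ZMod p →+* A := ZMod.castHom dvd_rfl A with hf
  have hcast : ∀ x : ZMod p, ((x.val : ℕ) : A) = f x := by
    intro x
    rw [hf, ZMod.natCast_val, ZMod.castHom_apply]
  refine ⟨?_, ?_, ?_⟩
  · simp [hpos]
  · by_cases h1 : 1 < p
    · simp [h1, hcast]
    · interval_cases p
      exact absurd hp Nat.not_prime_one
  · intro n m
    by_cases h : n + m < p
    · have hn : n < p := by omega
      have hm : m < p := by omega
      simp only [if_pos h, if_pos hn, if_pos hm, hcast]
      have key : ((n+m).choose n : ZMod p) * ((n+m).factorial : ZMod p)⁻¹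
          = ((n.factorial : ZMod p))⁻¹ * ((m.factorial : ZMod p))⁻¹ := by
        have hc := Nat.choose_mul_factorial_mul_factorial (Nat.le_add_right n m)
        have hc' : ((n+m).choose n : ZMod p) * (n.factorial : ZMod p) *
            (m.factorial : ZMod p) = ((n+m).factorial : ZMod p) := by
          rw [Nat.add_sub_cancel_left] at hc
          exact_mod_cast congrArg (Nat.cast : ℕ → ZMod p) hc
        field_simp [fact_ne _ hn, fact_ne _ hm, fact_ne _ h]
        linear_combination hc'
      calc ((n+m).choose n : A) * (f ((n+m).factorial : ZMod p)⁻¹ * a ^ (n+m))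
          = f (((n+m).choose n : ZMod p) * ((n+m).factorial : ZMod p)⁻¹) * a ^ (n+m) := by
            rw [map_mul, map_natCast]; ring
        _ = f (((n.factorial : ZMod p))⁻¹ * ((m.factorial : ZMod p))⁻¹) * (a ^ n * a ^ m) := by
            rw [key, ← pow_add]
        _ = f ((n.factorial : ZMod p))⁻¹ * a ^ n * (f ((m.factorial : ZMod p))⁻¹ * a ^ m) := by
            rw [map_mul]; ring
    · have hnm0 : a ^ (n + m) = 0 := by
        have : a ^ (n + m) = a ^ p * a ^ (n + m - p) := by
          rw [← pow_add]; congr 1; omega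
        rw [this, ha, zero_mul]
      beta_reduce
      rw [if_neg h, mul_zero]
      by_cases hn : n < p
      · by_cases hm : m < p
        · rw [if_pos hn, if_pos hm]
          have h2 : a ^ n * a ^ m = 0 := by rw [← pow_add, hnm0]
          calc (0 : A) = (((n.factorial : ZMod p))⁻¹.val : A) *
                (((m.factorial : ZMod p))⁻¹.val : A) * (a ^ n * a ^ m) := by
                rw [h2, mul_zero]
            _ = _ := by ring
        · rw [if_neg hm, mul_zero]
      · rw [if_neg hn, zero_mul]
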